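/- Let X and Θ be subsets of the reals and U : X × Θ → ℝ. Suppose that for each θ, the function x ↦ U(x,θ) is quasiconcave and differentiable, and that for each x the partial derivative U₁(x,θ) = ∂U/∂x(x,θ) satisfies single crossing in θ (i.e., for θ' > θ, U₁(x,θ) ≥ 0 implies U₁(x,θ') ≥ 0, and U₁(x,θ) > 0 implies U₁(x,θ') > 0). Then U satisfies the interval dominance order in (x;θ): for all x̂ > x such that U(x̂,θ) ≥ U(x',θ) for all x' ∈ X with x ≤ x' ≤ x̂, and for all θ̂ > θ, U(x̂,θ) − U(x,θ) ≥ 0 implies U(x̂,θ̂) − U(x,θ̂) ≥ 0, and U(x̂,θ) − U(x,θ) > 0 implies U(x̂,θ̂) − U(x,θ̂) > 0. -/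
import Mathlib


open Set

/-- From quasiconcavity: points between two points of the set are in the set,
and the value there is at least the min of the endpoint values. -/
lemma quasi_min {s : Set ℝ} {f : ℝ → ℝ} (h : QuasiconcaveOn ℝ s f) {a b w : ℝ}
    (ha : a ∈ s) (hb : b ∈ s) (hab : a ≤ b) (hw : w ∈ Icc a b) :
    w ∈ s ∧ min (f a) (f b) ≤ f w := by
  have hc := h (min (f a) (f b))
  have haC : a ∈ {x | x ∈ s ∧ min (f a) (f b) ≤ f x} := ⟨ha, min_le_left _ _⟩
  have hbC : b ∈ {x | x ∈ s ∧ min (f a) (f b) ≤ f x} := ⟨hb, min_le_right _ _⟩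
  have hseg := hc.segment_subset haC hbC
  rw [segment_eq_Icc hab] at hseg
  exact hseg hw

/-- Negative derivative gives a nearby point to the right with smaller value. -/
lemma step_right {f : ℝ → ℝ} {z b d : ℝ} (hzb : z < b) (hd : HasDerivAt f d z)
    (hdneg : d < 0) : ∃ w ∈ Ioo z b, f w < f z := by
  have h := hasDerivAt_iff_tendsto_slope.1 hd
  have h2 : Filter.Tendsto (slope f z) (nhdsWithin z (Ioi z)) (nhds d) :=
    h.mono_left (nhdsWithin_mono z (fun y hy => ne_of_gt hy))
  have hneg : ∀ᶠ w in nhdsWithin z (Ioi z), slope f z w < 0 :=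
    h2.eventually (gt_mem_nhds hdneg)
  have hIoo : Ioo z b ∈ nhdsWithin z (Ioi z) := Ioo_mem_nhdsGT_of_mem ⟨le_rfl, hzb⟩
  obtain ⟨w, hw1, hw2⟩ := (hneg.and (Filter.eventually_of_mem hIoo fun _ h => h)).exists
  refine ⟨w, hw2, ?_⟩
  rw [slope_def_field] at hw1
  have hwz : (0 : ℝ) < w - z := sub_pos.2 hw2.1
  have := (div_lt_iff₀ hwz).mp hw1
  linarith

/-- Positive derivative gives a nearby point to the left with smaller value. -/
lemma step_left {f : ℝ → ℝ} {z a d : ℝ} (haz : a < z) (hd : HasDerivAt f d z)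
    (hdpos : 0 < d) : ∃ w ∈ Ioo a z, f w < f z := by
  have h := hasDerivAt_iff_tendsto_slope.1 hd
  have h2 : Filter.Tendsto (slope f z) (nhdsWithin z (Iio z)) (nhds d) :=
    h.mono_left (nhdsWithin_mono z (fun y hy => ne_of_lt hy))
  have hpos : ∀ᶠ w in nhdsWithin z (Iio z), 0 < slope f z w :=
    h2.eventually (lt_mem_nhds hdpos)
  have hIoo : Ioo a z ∈ nhdsWithin z (Iio z) := Ioo_mem_nhdsLT_of_mem ⟨haz, le_rfl⟩
  obtain ⟨w, hw1, hw2⟩ := (hpos.and (Filter.eventually_of_mem hIoo fun _ h => h)).exists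
  refine ⟨w, hw2, ?_⟩
  rw [slope_def_field] at hw1
  have hwz : w - z < 0 := sub_neg.2 hw2.2
  have := (lt_div_iff_of_neg hwz).mp hw1
  linarith

/-- For a quasiconcave differentiable function, negative derivative at `z`
forces strictly smaller values to the right (within the set). -/
lemma quasi_decr {s : Set ℝ} {f : ℝ → ℝ} (h : QuasiconcaveOn ℝ s f) {z b : ℝ}
    (hz : z ∈ s) (hb : b ∈ s) (hzb : z < b)
    (hd : HasDerivAt f (deriv f z) z) (hdneg : deriv f z < 0) : f b < f z := by
  obtain ⟨w, hw, hfw⟩ := step_right hzb hd hdneg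
  by_contra hge
  push_neg at hge
  have := (quasi_min h hz hb hzb.le ⟨hw.1.le, hw.2.le⟩).2
  rw [min_eq_left hge] at this
  linarith

/-- For a quasiconcave differentiable function, positive derivative at `z`
forces strictly smaller values to the left (within the set). -/
lemma quasi_incr {s : Set ℝ} {f : ℝ → ℝ} (h : QuasiconcaveOn ℝ s f) {z a : ℝ}
    (hz : z ∈ s) (ha : a ∈ s) (haz : a < z)
    (hd : HasDerivAt f (deriv f z) z) (hdpos : 0 < deriv f z) : f a < f z := by
  obtain ⟨w, hw, hfw⟩ := step_left haz hd hdpos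
  by_contra hge
  push_neg at hge
  have := (quasi_min h ha hz haz.le ⟨hw.1.le, hw.2.le⟩).2
  rw [min_eq_right hge] at this
  linarith

/-- Interval dominance order from quasiconcavity, differentiability, and SC1 of the
marginal (Quah–Strulovici / Lemma 1 of the paper). -/
theorem stmt_0 (X Θ : Set ℝ) (U : ℝ → ℝ → ℝ)
    (hqc : ∀ θ ∈ Θ, QuasiconcaveOn ℝ X (fun x => U x θ))
    (hdiff : ∀ θ ∈ Θ, ∀ x ∈ X, DifferentiableAt ℝ (fun x' => U x' θ) x)
    (hSC1 : ∀ x ∈ X, ∀ θ ∈ Θ, ∀ θ' ∈ Θ, θ < θ' →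
      (0 ≤ deriv (fun x' => U x' θ) x → 0 ≤ deriv (fun x' => U x' θ') x) ∧
      (0 < deriv (fun x' => U x' θ) x → 0 < deriv (fun x' => U x' θ') x)) :
    ∀ x ∈ X, ∀ xhat ∈ X, x < xhat →
      ∀ θ ∈ Θ, ∀ θhat ∈ Θ, θ < θhat →
        (∀ x' ∈ X, x ≤ x' → x' ≤ xhat → U x' θ ≤ U xhat θ) →
          (U x θ ≤ U xhat θ → U x θhat ≤ U xhat θhat) ∧
          (U x θ < U xhat θ → U x θhat < U xhat θhat) := by
  intro x hx xhat hxhat hxx θ hθ θhat hθhat hθθ hint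
  set f : ℝ → ℝ := fun x' => U x' θ with hf
  set g : ℝ → ℝ := fun x' => U x' θhat with hg
  -- points between members of X lie in X
  have hsub : ∀ a b : ℝ, a ∈ X → b ∈ X → a ≤ b → Icc a b ⊆ X := fun a b ha hb hab w hw =>
    (quasi_min (hqc θ hθ) ha hb hab hw).1
  have hsubX : Icc x xhat ⊆ X := hsub x xhat hx hxhat hxx.le
  -- MVT prerequisites on any subinterval
  have hmvt : ∀ (θ' : ℝ), θ' ∈ Θ → ∀ a b : ℝ, a ∈ Icc x xhat → b ∈ Icc x xhat → a < b →
      ∃ c ∈ Ioo a b, deriv (fun x' => U x' θ') c = (U b θ' - U a θ') / (b - a) := by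
    intro θ' hθ' a b ha hb hab
    have hsubab : Icc a b ⊆ X := fun w hw => hsubX ⟨ha.1.trans hw.1, hw.2.trans hb.2⟩
    have hcont : ContinuousOn (fun x' => U x' θ') (Icc a b) := fun w hw =>
      (hdiff θ' hθ' w (hsubab hw)).continuousAt.continuousWithinAt
    have hdo : DifferentiableOn ℝ (fun x' => U x' θ') (Ioo a b) := fun w hw =>
      (hdiff θ' hθ' w (hsubab (Ioo_subset_Icc_self hw))).differentiableWithinAt
    exact exists_deriv_eq_slope (fun x' => U x' θ') hab hcont hdo
  -- Unconditional first part: U x θhat ≤ U xhat θhat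
  have main : U x θhat ≤ U xhat θhat := by
    by_contra hlt
    push_neg at hlt
    obtain ⟨z, hz, hdz⟩ := hmvt θhat hθhat x xhat ⟨le_rfl, hxx.le⟩ ⟨hxx.le, le_rfl⟩ hxx
    have hzX : z ∈ X := hsubX ⟨hz.1.le, hz.2.le⟩
    have hslope : deriv g z < 0 := by
      rw [hg, hdz]
      apply div_neg_of_neg_of_pos <;> linarith
    have hderθ : deriv f z < 0 := by
      by_contra hge
      push_neg at hge
      exact absurd ((hSC1 z hzX θ hθ θhat hθhat hθθ).1 hge) (not_le.2 hslope)
    have hdec : f xhat < f z :=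
      quasi_decr (hqc θ hθ) hzX hxhat hz.2 (hdiff θ hθ z hzX).hasDerivAt hderθ
    exact absurd (hint z hzX hz.1.le hz.2.le) (not_le.2 hdec)
  refine ⟨fun _ => main, fun hstrict => ?_⟩
  -- Strict part
  by_contra hnlt
  push_neg at hnlt
  have heq : U xhat θhat = U x θhat := le_antisymm hnlt main
  -- MVT for θ on [x, xhat] gives a point with positive derivative
  obtain ⟨z, hz, hdz⟩ := hmvt θ hθ x xhat ⟨le_rfl, hxx.le⟩ ⟨hxx.le, le_rfl⟩ hxx
  have hzX : z ∈ X := hsubX ⟨hz.1.le, hz.2.le⟩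
  have hderθ : 0 < deriv f z := by
    rw [hf, hdz]
    apply div_pos <;> linarith
  have hderθhat : 0 < deriv g z := (hSC1 z hzX θ hθ θhat hθhat hθθ).2 hderθ
  have hincr : g x < g z :=
    quasi_incr (hqc θhat hθhat) hzX hx hz.1 (hdiff θhat hθhat z hzX).hasDerivAt hderθhat
  -- so g xhat = g x < g z, MVT on [z, xhat] for g gives a negative derivative point
  have hgz : g xhat < g z := by
    have : g xhat = g x := heq
    linarith
  obtain ⟨w, hw, hdw⟩ := hmvt θhat hθhat z xhat ⟨hz.1.le, hz.2.le⟩ ⟨hxx.le, le_rfl⟩ hz.2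
  have hwX : w ∈ X := hsubX ⟨hz.1.le.trans hw.1.le, hw.2.le⟩
  have hslope : deriv g w < 0 := by
    rw [hg, hdw]
    apply div_neg_of_neg_of_pos
    · have : g xhat < g z := hgz
      simp only [hg] at this
      linarith
    · linarith [hz.2]
  have hderθw : deriv f w < 0 := by
    by_contra hge
    push_neg at hge
    exact absurd ((hSC1 w hwX θ hθ θhat hθhat hθθ).1 hge) (not_le.2 hslope)
  have hdec : f xhat < f w :=
    quasi_decr (hqc θ hθ) hwX hxhat hw.2 (hdiff θ hθ w hwX).hasDerivAt hderθw
  exact absurd (hint w hwX (hz.1.le.trans hw.1.le) hw.2.le) (not_le.2 hdec)
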